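/- Let t be a contraction on H. Then for every integer k ≥ 1, the following identity holds in [0,∞]: Tr(1 − tt*) = Tr(t^k (1 − tt*) (t*)^k) + Tr((1 − t*t)^{1/2} (1 − t^k (t*)^k) (1 − t*t)^{1/2}). -/

import Mathlib

open Filter Finset ContinuousLinearMap
open scoped ENNReal

set_option maxHeartbeats 1000000
set_option synthInstance.maxHeartbeats 1000000

/-- The trace (in `[0,∞]`) of an operator on a complex Hilbert space, computed in a
Hilbert (orthonormal) basis `b`: `Tr A = ∑ᵢ ⟨bᵢ, A bᵢ⟩` (real part, clamped to `[0,∞]`).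
For a positive operator this is the usual trace, independent of the choice of basis. -/
noncomputable def opTrace {H : Type*} [NormedAddCommGroup H] [InnerProductSpace ℂ H]
    [CompleteSpace H] {ι : Type*} (b : HilbertBasis ι ℂ H) (A : H →L[ℂ] H) : ℝ≥0∞ :=
  ∑' i, ENNReal.ofReal (inner ℂ (b i) (A (b i)) : ℂ).re

section Aux

variable {H : Type*} [NormedAddCommGroup H] [InnerProductSpace ℂ H] [CompleteSpace H]
  {ι : Type*} (b : HilbertBasis ι ℂ H)

lemma opTrace_add_of_pos {A B : H →L[ℂ] H} (hA : A.IsPositive) (hB : B.IsPositive) :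
    opTrace b (A + B) = opTrace b A + opTrace b B := by
  unfold opTrace
  rw [← ENNReal.tsum_add]
  congr 1; funext i
  have hA' : (0:ℝ) ≤ (inner ℂ (b i) (A (b i)) : ℂ).re := by
    exact (Complex.nonneg_iff.mp (hA.inner_nonneg_right (b i))).1
  have hB' : (0:ℝ) ≤ (inner ℂ (b i) (B (b i)) : ℂ).re := by
    exact (Complex.nonneg_iff.mp (hB.inner_nonneg_right (b i))).1
  simp only [ContinuousLinearMap.add_apply, inner_add_right, Complex.add_re]
  rw [ENNReal.ofReal_add hA' hB']

lemma opTrace_star_mul_self (X : H →L[ℂ] H) :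
    opTrace b (star X * X)
      = ∑' i, ∑' j, ENNReal.ofReal (‖(inner ℂ (b j) (X (b i)) : ℂ)‖ ^ 2) := by
  unfold opTrace
  congr 1; funext i
  have hv : (inner ℂ (b i) ((star X * X) (b i)) : ℂ).re = ‖X (b i)‖ ^ 2 := by
    rw [ContinuousLinearMap.mul_apply, star_eq_adjoint, adjoint_inner_right]
    simpa using (inner_self_eq_norm_sq (𝕜 := ℂ) (X (b i)))
  rw [hv]
  set v := X (b i) with hvdef
  have hsum : HasSum (fun j => ‖(inner ℂ (b j) v : ℂ)‖ ^ 2) (‖v‖ ^ 2) := by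
    have h := b.hasSum_inner_mul_inner v v
    have h' := h.mapL Complex.reCLM
    have he : ∀ j, ((inner ℂ v (b j) : ℂ) * (inner ℂ (b j) v : ℂ)).re
        = ‖(inner ℂ (b j) v : ℂ)‖ ^ 2 := by
      intro j
      rw [← inner_conj_symm (b j) v, RCLike.mul_conj, RCLike.norm_conj]
      norm_cast
    have he2 : ((inner ℂ v v : ℂ)).re = ‖v‖ ^ 2 := by
      simpa using (inner_self_eq_norm_sq (𝕜 := ℂ) v)
    have h'' : (((‖v‖:ℂ) ^ 2).re) = ‖v‖ ^ 2 := by rw [← Complex.ofReal_pow, Complex.ofReal_re]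
    simpa [he, he2, h''] using h'
  rw [← hsum.tsum_eq,
    ENNReal.ofReal_tsum_of_nonneg (fun j => sq_nonneg _) hsum.summable]

lemma opTrace_star_mul_comm (X : H →L[ℂ] H) :
    opTrace b (star X * X) = opTrace b (X * star X) := by
  have hXX : X * star X = star (star X) * star X := by rw [star_star]
  rw [opTrace_star_mul_self b X, hXX, opTrace_star_mul_self b (star X)]
  rw [ENNReal.tsum_comm]
  congr 1; funext j
  congr 1; funext i
  congr 2
  have : (inner ℂ (b j) (X (b i)) : ℂ) = starRingEnd ℂ (inner ℂ (b i) ((star X) (b j)) : ℂ) := by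
    rw [star_eq_adjoint, adjoint_inner_right, inner_conj_symm]
  rw [this, RCLike.norm_conj]

lemma isPositive_star_mul_self (W : H →L[ℂ] H) : (star W * W).IsPositive := by
  have h := (isPositive_one (E := H) (𝕜 := ℂ)).adjoint_conj W
  have : adjoint W ∘L (1 : H →L[ℂ] H) ∘L W = star W * W := by
    ext x; simp [star_eq_adjoint]
  rwa [this] at h

lemma isPositive_mul_star_self (W : H →L[ℂ] H) : (W * star W).IsPositive := by
  simpa using isPositive_star_mul_self (star W)

lemma isPositive_one_sub_mul_star {s : H →L[ℂ] H} (hs : ‖s‖ ≤ 1) :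
    (1 - s * star s).IsPositive := by
  rw [isPositive_def']
  constructor
  · rw [IsSelfAdjoint]
    simp [star_sub, star_mul, star_star]
  · intro x
    have h1 : (1 - s * star s).reApplyInnerSelf x
        = ‖x‖ ^ 2 - ‖(star s) x‖ ^ 2 := by
      have h5 := ContinuousLinearMap.adjoint_inner_right
        (ContinuousLinearMap.adjoint s) x ((ContinuousLinearMap.adjoint s) x)
      rw [ContinuousLinearMap.adjoint_adjoint] at h5
      rw [ContinuousLinearMap.reApplyInnerSelf, ContinuousLinearMap.sub_apply,
        ContinuousLinearMap.one_apply, inner_sub_left, map_sub]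
      have h3 : RCLike.re (inner ℂ x x : ℂ) = ‖x‖ ^ 2 := inner_self_eq_norm_sq x
      rw [h3]
      congr 1
      rw [inner_re_symm, ContinuousLinearMap.mul_apply, star_eq_adjoint, h5]
      exact inner_self_eq_norm_sq _
    rw [h1]
    have hns : ‖(star s) x‖ ≤ ‖x‖ := by
      calc ‖(star s) x‖ ≤ ‖star s‖ * ‖x‖ := (star s).le_opNorm x
        _ ≤ 1 * ‖x‖ := by
            have : ‖star s‖ ≤ 1 := by rwa [norm_star]
            exact mul_le_mul_of_nonneg_right this (norm_nonneg x)
        _ = ‖x‖ := one_mul _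
    have := mul_self_le_mul_self (norm_nonneg _) hns
    nlinarith [norm_nonneg ((star s) x), norm_nonneg x]

end Aux

/-- The telescoped trace identity for a contraction `t`: for every `k ≥ 1`, in `[0,∞]`,
`Tr(1 - t t*) = Tr(tᵏ (1 - t t*) (t*)ᵏ) + Tr(c (1 - tᵏ (t*)ᵏ) c)`, where `c` is the
positive square root of `1 - t* t`. -/
theorem telescoped_trace_identity
    {H : Type*} [NormedAddCommGroup H] [InnerProductSpace ℂ H] [CompleteSpace H]
    {ι : Type*} (b : HilbertBasis ι ℂ H)
    (t : H →L[ℂ] H) (ht : ‖t‖ ≤ 1)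
    (c : H →L[ℂ] H) (hc : c.IsPositive) (hc2 : c * c = 1 - star t * t) :
    ∀ k : ℕ, 1 ≤ k →
      opTrace b (1 - t * star t)
        = opTrace b (t ^ k * (1 - t * star t) * (star t) ^ k)
          + opTrace b (c * (1 - t ^ k * (star t) ^ k) * c) := by
  -- the positive square root of `1 - t t*`
  have hDpos : (1 - t * star t).IsPositive := isPositive_one_sub_mul_star ht
  have hDnn : (0 : H →L[ℂ] H) ≤ 1 - t * star t :=
    (nonneg_iff_isPositive _).mpr hDpos
  set a : H →L[ℂ] H := CFC.sqrt (1 - t * star t) with ha_def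
  have ha2 : a * a = 1 - t * star t := CFC.sqrt_mul_sqrt_self _ hDnn
  have ha_pos : a.IsPositive := (nonneg_iff_isPositive a).mp (CFC.sqrt_nonneg _)
  have has : star a = a := ha_pos.isSelfAdjoint
  have hcs : star c = c := hc.isSelfAdjoint
  have hkey : star t * t + c * c = 1 := by rw [hc2]; noncomm_ring
  -- positivity of `1 - tᵏ (t*)ᵏ`
  have hpowpos : ∀ k : ℕ, (1 - t ^ k * (star t) ^ k).IsPositive := by
    intro k
    match k with
    | 0 => simpa using isPositive_zero (𝕜 := ℂ) (E := H)
    | (k + 1) =>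
      have hnorm : ‖t ^ (k + 1)‖ ≤ 1 := by
        calc ‖t ^ (k + 1)‖ ≤ ‖t‖ ^ (k + 1) := norm_pow_le' t k.succ_pos
          _ ≤ 1 := pow_le_one₀ (norm_nonneg t) ht
      have := isPositive_one_sub_mul_star hnorm
      simpa [star_pow] using this
  -- positivity of the conjugated operators
  have hconj : ∀ (A : H →L[ℂ] H), A.IsPositive → (c * A * c).IsPositive := by
    intro A hA
    have h := hA.adjoint_conj c
    have : adjoint c ∘L A ∘L c = c * A * c := by
      ext x; simp [← star_eq_adjoint, hcs, mul_assoc]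
    rwa [this] at h
  -- the key telescoping step
  have step : ∀ k : ℕ,
      opTrace b (t ^ k * (1 - t * star t) * (star t) ^ k)
        = opTrace b (t ^ (k + 1) * (1 - t * star t) * (star t) ^ (k + 1))
          + opTrace b (c * (t ^ k * (1 - t * star t) * (star t) ^ k) * c) := by
    intro k
    set X := t ^ k * a with hX
    set Y := t * (t ^ k * a) with hY
    set Z := c * (t ^ k * a) with hZ
    have hXs : star X = a * (star t) ^ k := by rw [hX, star_mul, has, star_pow]
    have hYs : star Y = a * (star t) ^ k * star t := by
      rw [hY, star_mul, star_mul, has, star_pow]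
    have hZs : star Z = a * (star t) ^ k * c := by
      rw [hZ, star_mul, star_mul, has, star_pow, hcs, mul_assoc]
    have h1 : t ^ k * (1 - t * star t) * (star t) ^ k = X * star X := by
      rw [hXs, hX, ← ha2]; noncomm_ring
    have h2 : t ^ (k + 1) * (1 - t * star t) * (star t) ^ (k + 1) = Y * star Y := by
      rw [hYs, hY, pow_succ' t k, pow_succ (star t) k, ← ha2]; noncomm_ring
    have h3 : c * (t ^ k * (1 - t * star t) * (star t) ^ k) * c = Z * star Z := by
      rw [hZs, hZ, ← ha2]; noncomm_ring
    have hdec : star X * X = star Y * Y + star Z * Z := by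
      rw [hXs, hYs, hZs, hX, hY, hZ]
      have : a * (star t) ^ k * (t ^ k * a)
          = a * (star t) ^ k * ((star t * t + c * c) * (t ^ k * a)) := by
        rw [hkey, one_mul]
      rw [this]; noncomm_ring
    rw [h3, h2, h1, (opTrace_star_mul_comm b X).symm, hdec,
      opTrace_add_of_pos b (isPositive_star_mul_self Y) (isPositive_star_mul_self Z),
      opTrace_star_mul_comm b Y, opTrace_star_mul_comm b Z]
  -- base case from `step 0`
  intro k hk
  induction k, hk using Nat.le_induction with
  | base =>
    have h0 := step 0
    have e1 : t ^ 0 * (1 - t * star t) * (star t) ^ 0 = 1 - t * star t := by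
      simp
    have e2 : c * (1 - t ^ 1 * (star t) ^ 1) * c
        = c * (t ^ 0 * (1 - t * star t) * (star t) ^ 0) * c := by
      rw [e1]; simp
    rw [e2]
    rw [e1] at h0
    exact h0
  | succ k hk ih =>
    have hs := step k
    have hadd : c * (1 - t ^ (k + 1) * (star t) ^ (k + 1)) * c
        = c * (1 - t ^ k * (star t) ^ k) * c
          + c * (t ^ k * (1 - t * star t) * (star t) ^ k) * c := by
      rw [pow_succ t k, pow_succ' (star t) k]; noncomm_ring
    have hp1 : (c * (1 - t ^ k * (star t) ^ k) * c).IsPositive := hconj _ (hpowpos k)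
    have hp2 : (c * (t ^ k * (1 - t * star t) * (star t) ^ k) * c).IsPositive := by
      have hXX : t ^ k * (1 - t * star t) * (star t) ^ k
          = (t ^ k * a) * star (t ^ k * a) := by
        rw [star_mul, has, star_pow, ← ha2]; noncomm_ring
      rw [hXX]
      exact hconj _ (isPositive_mul_star_self _)
    rw [hadd, opTrace_add_of_pos b hp1 hp2]
    rw [ih, hs]
    ring
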